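/- With the setup above, the radius of curvature of β at parameter φ equals R_β(φ) = ((R_α - λ)² + (λ')²)^{3/2} / ((R_α - λ)(R_α - λ + λ'') - λ'(R_α' - 2λ')), evaluated at φ, whenever the denominator is positive. -/

import Mathlib

open Real

noncomputable def tau (φ : ℝ) : EuclideanSpace ℝ (Fin 2) := !₂[Real.cos φ, Real.sin φ]

noncomputable def eta (φ : ℝ) : EuclideanSpace ℝ (Fin 2) := !₂[-Real.sin φ, Real.cos φ]

/-- planar cross product u × v = u₁v₂ - u₂v₁ -/
noncomputable def cross (u v : EuclideanSpace ℝ (Fin 2)) : ℝ := u 0 * v 1 - u 1 * v 0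

lemma hasDerivAt_pi' (f : ℝ → EuclideanSpace ℝ (Fin 2)) (f' : EuclideanSpace ℝ (Fin 2)) (x : ℝ)
    (h : ∀ i, HasDerivAt (fun x => f x i) (f' i) x) : HasDerivAt f f' x := by
  have h1 : HasDerivAt (fun x i => f x i) (fun i => f' i) x := hasDerivAt_pi.2 h
  exact ((PiLp.continuousLinearEquiv 2 ℝ (fun _ : Fin 2 => ℝ)).symm.toContinuousLinearMap.hasFDerivAt.comp_hasDerivAt x h1 :)

lemma hasDerivAt_tau (φ : ℝ) : HasDerivAt tau (eta φ) φ := by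
  apply hasDerivAt_pi'
  intro i
  fin_cases i <;> simp [tau, eta]
  · exact (Real.hasDerivAt_cos φ)
  · exact (Real.hasDerivAt_sin φ)

lemma hasDerivAt_eta (φ : ℝ) : HasDerivAt eta (-tau φ) φ := by
  apply hasDerivAt_pi'
  intro i
  fin_cases i <;> simp [tau, eta]
  · exact (Real.hasDerivAt_sin φ).neg
  · exact (Real.hasDerivAt_cos φ)

theorem stmt10 (α : ℝ → EuclideanSpace ℝ (Fin 2)) (Rα : ℝ → ℝ) (lam : ℝ → ℝ)
    (hα : ContDiff ℝ 4 α) (hlam : ContDiff ℝ 4 lam)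
    (hRα : ContDiff ℝ 2 Rα) (hRpos : ∀ φ, 0 < Rα φ)
    (hderiv : ∀ φ, deriv α φ = Rα φ • tau φ)
    (β : ℝ → EuclideanSpace ℝ (Fin 2))
    (hβ : ∀ φ, β φ = α φ + lam φ • eta φ)
    (φ : ℝ)
    (hden : 0 < (Rα φ - lam φ) * (Rα φ - lam φ + deriv (deriv lam) φ)
        - deriv lam φ * (deriv Rα φ - 2 * deriv lam φ)) :
    ‖deriv β φ‖ ^ 3 / cross (deriv β φ) (deriv (deriv β) φ) =
      ((Rα φ - lam φ) ^ 2 + (deriv lam φ) ^ 2) ^ ((3 : ℝ) / 2) /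
        ((Rα φ - lam φ) * (Rα φ - lam φ + deriv (deriv lam) φ)
          - deriv lam φ * (deriv Rα φ - 2 * deriv lam φ)) := by
  have hβf : β = fun ψ => α ψ + lam ψ • eta ψ := funext hβ
  have hlam1 : Differentiable ℝ lam := hlam.differentiable (by norm_num)
  have hlam2 : ContDiff ℝ 3 (deriv lam) := by
    have := (contDiff_succ_iff_deriv (n := 3)).1 (by exact_mod_cast hlam)
    exact this.2.2
  have hlam2' : Differentiable ℝ (deriv lam) := hlam2.differentiable (by norm_num)
  have hRα1 : Differentiable ℝ Rα := hRα.differentiable (by norm_num)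
  -- first derivative of β, everywhere
  have h1 : ∀ ψ, HasDerivAt β ((Rα ψ - lam ψ) • tau ψ + deriv lam ψ • eta ψ) ψ := by
    intro ψ
    have hαd : HasDerivAt α (Rα ψ • tau ψ) ψ := by
      have := (hα.differentiable (by norm_num) ψ).hasDerivAt
      rwa [hderiv ψ] at this
    have hs : HasDerivAt (fun ψ => lam ψ • eta ψ)
        (lam ψ • (-tau ψ) + deriv lam ψ • eta ψ) ψ :=
      (hlam1 ψ).hasDerivAt.smul (hasDerivAt_eta ψ)
    have := hαd.add hs
    rw [hβf]
    refine this.congr_deriv ?_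
    module
  have hd1 : deriv β = fun ψ => (Rα ψ - lam ψ) • tau ψ + deriv lam ψ • eta ψ :=
    funext fun ψ => (h1 ψ).deriv
  -- second derivative at φ
  have h2 : HasDerivAt (deriv β)
      ((deriv Rα φ - 2 * deriv lam φ) • tau φ
        + (Rα φ - lam φ + deriv (deriv lam) φ) • eta φ) φ := by
    rw [hd1]
    have ha : HasDerivAt (fun ψ => (Rα ψ - lam ψ) • tau ψ)
        ((Rα φ - lam φ) • eta φ + (deriv Rα φ - deriv lam φ) • tau φ) φ :=
      ((hRα1 φ).hasDerivAt.sub (hlam1 φ).hasDerivAt).smul (hasDerivAt_tau φ)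
    have hb : HasDerivAt (fun ψ => deriv lam ψ • eta ψ)
        (deriv lam φ • (-tau φ) + deriv (deriv lam) φ • eta φ) φ :=
      (hlam2' φ).hasDerivAt.smul (hasDerivAt_eta φ)
    refine (ha.add hb).congr_deriv ?_
    module
  have hd2 := h2.deriv
  set a := Rα φ - lam φ with ha
  set b := deriv lam φ with hb
  set c := deriv Rα φ - 2 * deriv lam φ with hc
  set d := Rα φ - lam φ + deriv (deriv lam) φ with hd
  have hu : deriv β φ = a • tau φ + b • eta φ := by rw [hd1]
  have hv : deriv (deriv β) φ = c • tau φ + d • eta φ := hd2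
  have pyth : Real.cos φ ^ 2 + Real.sin φ ^ 2 = 1 := by
    rw [add_comm]; exact Real.sin_sq_add_cos_sq φ
  have hcross : cross (deriv β φ) (deriv (deriv β) φ) = a * d - b * c := by
    simp only [cross, hu, hv, PiLp.add_apply, PiLp.smul_apply, tau, eta,
      Matrix.cons_val_zero, Matrix.cons_val_one, Matrix.head_cons, smul_eq_mul]
    nlinarith [pyth]
  have hnorm : ‖deriv β φ‖ = Real.sqrt (a ^ 2 + b ^ 2) := by
    rw [hu, EuclideanSpace.norm_eq]
    congr 1
    simp only [PiLp.add_apply, PiLp.smul_apply, tau, eta, Fin.sum_univ_two,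
      Matrix.cons_val_zero, Matrix.cons_val_one, Matrix.head_cons, smul_eq_mul,
      Real.norm_eq_abs, sq_abs]
    nlinarith [pyth]
  have hcube : ‖deriv β φ‖ ^ 3 = (a ^ 2 + b ^ 2) ^ ((3 : ℝ) / 2) := by
    rw [hnorm, ← Real.rpow_natCast (Real.sqrt _) 3, Real.sqrt_eq_rpow,
      ← Real.rpow_mul (by positivity)]
    norm_num
  rw [hcross, hcube]
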